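/- Let W be a closed linear sublattice of ℓᵖ(X, w) containing the constant function 1, where X is countable, w is a summable positive weight, and 1 ≤ p < ∞. Define x ∼ y iff f(x) = f(y) for all f ∈ W. Then for every equivalence class E of ∼, the characteristic function χ_E belongs to W. -/

import Mathlib

open MeasureTheory Filter Topology

/-- Proposition 8 (first part): if `W` is a closed linear sublattice of
`ℓᵖ(X, w)` (`X` countable, `w` a summable positive weight) containing `1`, then
the characteristic function of every equivalence class of the relation
`x ∼ y ↔ ∀ f ∈ W, f x = f y` belongs to `W`. -/
theorem indicator_of_class_mem
    {X : Type*} [Countable X] [MeasurableSpace X] [MeasurableSingletonClass X]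
    (w : X → ℝ) (hw : ∀ x, 0 < w x) (hsum : Summable w)
    (μ : Measure X) (hμ : ∀ x, μ {x} = ENNReal.ofReal (w x))
    (p : ENNReal) [Fact (1 ≤ p)] (hp : p ≠ ⊤)
    (W : Submodule ℝ (Lp ℝ p μ)) (hclosed : IsClosed (W : Set (Lp ℝ p μ)))
    (hlat : ∀ f ∈ W, ∀ g ∈ W, f ⊔ g ∈ W ∧ f ⊓ g ∈ W)
    (one : Lp ℝ p μ) (hone : ∀ᵐ x ∂μ, one x = 1) (hone' : one ∈ W)
    (a : X) :
    ∃ χ ∈ W, ⇑χ =ᵐ[μ] Set.indicator {x | ∀ f ∈ W, f x = f a} (fun _ => (1 : ℝ)) := by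
  classical
  have hp1 : (1 : ENNReal) ≤ p := Fact.out
  have hp0 : p ≠ 0 := by
    intro h; rw [h] at hp1; simp at hp1
  -- a.e. statements hold everywhere, since all singletons have positive measure
  have hae : ∀ {P : X → Prop}, (∀ᵐ x ∂μ, P x) → ∀ x, P x := by
    intro P h x
    by_contra hx
    rw [ae_iff] at h
    have h1 : μ {x} ≤ μ {y | ¬ P y} := measure_mono (by simpa using hx)
    rw [h, hμ] at h1
    exact absurd h1 (by simpa using (ENNReal.ofReal_pos.2 (hw x)).ne')
  have hone_all : ∀ x, one x = 1 := hae hone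
  have hsup : ∀ f g : Lp ℝ p μ, ∀ x, (f ⊔ g) x = max (f x) (g x) := by
    intro f g x
    have := hae (Lp.coeFn_sup f g) x
    simpa [Pi.sup_apply] using this
  have hinf : ∀ f g : Lp ℝ p μ, ∀ x, (f ⊓ g) x = min (f x) (g x) := by
    intro f g x
    have := hae (Lp.coeFn_inf f g) x
    simpa [Pi.inf_apply] using this
  have hsub : ∀ f g : Lp ℝ p μ, ∀ x, (f - g) x = f x - g x := by
    intro f g x; exact hae (Lp.coeFn_sub f g) x
  have hneg : ∀ f : Lp ℝ p μ, ∀ x, (-f) x = -(f x) := by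
    intro f x; exact hae (Lp.coeFn_neg f) x
  have hsmul : ∀ (c : ℝ) (f : Lp ℝ p μ), ∀ x, (c • f) x = c * f x := by
    intro c f x
    have := hae (Lp.coeFn_smul c f) x
    simpa using this
  have hzero : ∀ x, (0 : Lp ℝ p μ) x = 0 := by
    intro x; exact hae (Lp.coeFn_zero ℝ p μ) x
  set E : Set X := {x | ∀ f ∈ W, f x = f a} with hE
  -- for each `y`, a function `g ∈ W` with values in `[0,1]`, equal to `1` on `E`,
  -- and vanishing at `y` when `y ∉ E`
  have key : ∀ y : X, ∃ g : Lp ℝ p μ, g ∈ W ∧ (∀ x, 0 ≤ g x) ∧ (∀ x, g x ≤ 1) ∧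
      (∀ x ∈ E, g x = 1) ∧ (y ∉ E → g y = 0) := by
    intro y
    by_cases hy : y ∈ E
    · exact ⟨one, hone', fun x => by rw [hone_all x]; norm_num,
        fun x => (hone_all x).le, fun x _ => hone_all x, fun h => absurd hy h⟩
    · have : ∃ f ∈ W, f y ≠ f a := by
        by_contra hc
        push_neg at hc
        exact hy hc
      obtain ⟨f, hfW, hfy⟩ := this
      set c : ℝ := f a with hc
      have hsubW : f - c • one ∈ W := W.sub_mem hfW (W.smul_mem c hone')
      set h : Lp ℝ p μ := (f - c • one) ⊔ (-(f - c • one)) with hh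
      have hhW : h ∈ W := (hlat _ hsubW _ (W.neg_mem hsubW)).1
      have hval : ∀ x, h x = |f x - c| := by
        intro x
        rw [hh, hsup, hneg, hsub, hsmul, hone_all, mul_one]
        exact (abs_eq_max_neg (a := f x - c)).symm
      set t : ℝ := |f y - c| with ht
      have htpos : 0 < t := abs_pos.2 (sub_ne_zero.2 hfy)
      set g : Lp ℝ p μ := (one - t⁻¹ • h) ⊔ 0 with hgdef
      have hgW : g ∈ W := (hlat _ (W.sub_mem hone' (W.smul_mem _ hhW)) _ W.zero_mem).1
      have hgval : ∀ x, g x = max (1 - t⁻¹ * |f x - c|) 0 := by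
        intro x
        rw [hgdef, hsup, hzero, hsub, hsmul, hone_all, hval]
      refine ⟨g, hgW, ?_, ?_, ?_, ?_⟩
      · intro x; rw [hgval]; exact le_max_right _ _
      · intro x; rw [hgval]
        have : (0:ℝ) ≤ t⁻¹ * |f x - c| := by positivity
        apply max_le (by linarith) (by norm_num)
      · intro x hx
        have hfx : f x = c := hx f hfW
        rw [hgval, hfx]
        simp
      · intro _
        rw [hgval, ← ht, inv_mul_cancel₀ htpos.ne']
        simp
  choose g hgW hg0 hg1 hgE hgy using key
  -- enumerate `X`
  have : Nonempty X := ⟨a⟩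
  obtain ⟨u, hu⟩ := exists_surjective_nat X
  -- the decreasing sequence of minima
  set G : ℕ → Lp ℝ p μ := fun n => Nat.rec (g (u 0)) (fun n Gn => Gn ⊓ g (u (n+1))) n
    with hG
  have hGsucc : ∀ n, G (n+1) = G n ⊓ g (u (n+1)) := fun n => rfl
  have hGW : ∀ n, G n ∈ W := by
    intro n
    induction n with
    | zero => exact hgW (u 0)
    | succ n ih => exact (hlat _ ih _ (hgW (u (n+1)))).2
  have hG0 : ∀ n x, 0 ≤ G n x := by
    intro n
    induction n with
    | zero => exact hg0 (u 0)
    | succ n ih =>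
      intro x
      rw [hGsucc, hinf]
      exact le_min (ih x) (hg0 _ x)
  have hG1 : ∀ n x, G n x ≤ 1 := by
    intro n
    induction n with
    | zero => exact hg1 (u 0)
    | succ n ih =>
      intro x
      rw [hGsucc, hinf]
      exact min_le_of_left_le (ih x)
  have hGE : ∀ n, ∀ x ∈ E, G n x = 1 := by
    intro n
    induction n with
    | zero => exact hgE (u 0)
    | succ n ih =>
      intro x hx
      rw [hGsucc, hinf, ih x hx, hgE _ x hx]
      simp
  have hGle : ∀ n m, m ≤ n → ∀ x, G n x ≤ g (u m) x := by
    intro n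
    induction n with
    | zero =>
      intro m hm x
      interval_cases m
      exact le_rfl
    | succ n ih =>
      intro m hm x
      rw [hGsucc, hinf]
      rcases Nat.lt_succ_iff_lt_or_eq.mp (Nat.lt_succ_of_le hm) with h | h
      · exact min_le_of_left_le (ih m (Nat.lt_succ_iff.mp h) x)
      · rw [h]; exact min_le_right _ _
  -- measurability and finiteness facts
  have hmeas : ∀ s : Set X, MeasurableSet s := fun s => s.to_countable.measurableSet
  have hfin : IsFiniteMeasure μ := by
    constructor
    have h1 : μ Set.univ ≤ ∑' x : X, μ {x} := by
      rw [← Set.iUnion_of_singleton X]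
      exact measure_iUnion_le _
    have h2 : ∑' x : X, μ {x} = ENNReal.ofReal (∑' x, w x) := by
      simp_rw [hμ]
      exact (ENNReal.ofReal_tsum_of_nonneg (fun x => (hw x).le) hsum).symm
    exact lt_of_le_of_lt (h1.trans h2.le) ENNReal.ofReal_lt_top
  set χ₀ : X → ℝ := Set.indicator E (fun _ => (1:ℝ)) with hχ₀
  have hχmeas : AEStronglyMeasurable χ₀ μ :=
    (measurable_of_countable χ₀).stronglyMeasurable.aestronglyMeasurable
  have hχmem : MemLp χ₀ p μ := by
    refine MemLp.of_bound hχmeas 1 (Filter.Eventually.of_forall fun x => ?_)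
    rw [hχ₀]
    by_cases hx : x ∈ E <;> simp [Set.indicator_apply, hx]
  -- the tail sets
  set A : ℕ → Set X := fun n => {x | ∀ m ≤ n, u m ≠ x} with hA
  have hAanti : Antitone A := by
    intro i j hij x hx m hm
    exact hx m (hm.trans hij)
  have hAiInter : ⋂ n, A n = ∅ := by
    ext x
    simp only [Set.mem_iInter, Set.mem_empty_iff_false, iff_false]
    intro hx
    obtain ⟨m, hm⟩ := hu x
    exact hx m m le_rfl hm
  -- pointwise bound: |G n - χ₀| ≤ indicator of A n
  have hbound : ∀ n x, ‖G n x - χ₀ x‖ ≤ ‖Set.indicator (A n) (fun _ => (1:ℝ)) x‖ := by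
    intro n x
    by_cases hx : x ∈ E
    · rw [hGE n x hx, hχ₀, Set.indicator_of_mem hx]
      simp
    · rw [hχ₀, Set.indicator_of_notMem hx, sub_zero]
      by_cases hxA : x ∈ A n
      · rw [Set.indicator_of_mem hxA]
        simp only [norm_one, Real.norm_eq_abs, abs_le]
        exact ⟨by linarith [hG0 n x], hG1 n x⟩
      · have : ∃ m ≤ n, u m = x := by
          simp only [hA, Set.mem_setOf_eq, not_forall] at hxA
          obtain ⟨m, hm1, hm2⟩ := hxA
          exact ⟨m, hm1, not_not.mp hm2⟩
        obtain ⟨m, hmn, hmx⟩ := this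
        have h1 : G n x ≤ 0 := by
          have := hGle n m hmn x
          rw [hmx, hgy x hx] at this
          exact this
        have h2 : G n x = 0 := le_antisymm h1 (hG0 n x)
        rw [h2]
        simp
  -- convergence of `eLpNorm (G n - χ₀)` to zero
  have htends : Tendsto (fun n => eLpNorm (⇑(G n) - χ₀) p μ) atTop (𝓝 0) := by
    have hle : ∀ n, eLpNorm (⇑(G n) - χ₀) p μ ≤ μ (A n) ^ (1 / p.toReal) := by
      intro n
      calc eLpNorm (⇑(G n) - χ₀) p μ
          ≤ eLpNorm (Set.indicator (A n) (fun _ => (1:ℝ))) p μ :=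
            eLpNorm_mono (fun x => by simpa using hbound n x)
        _ = ‖(1:ℝ)‖₊ • μ (A n) ^ (1 / p.toReal) :=
            eLpNorm_indicator_const (hmeas _) hp0 hp
        _ = μ (A n) ^ (1 / p.toReal) := by simp
    have hμA : Tendsto (fun n => μ (A n)) atTop (𝓝 0) := by
      have := tendsto_measure_iInter_atTop (μ := μ)
        (fun n => (hmeas (A n)).nullMeasurableSet) hAanti
        ⟨0, (measure_lt_top μ _).ne⟩
      rw [hAiInter] at this
      simp only [measure_empty] at this
      exact this
    have hcont : Tendsto (fun n => μ (A n) ^ (1 / p.toReal)) atTop (𝓝 0) := by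
      have h0 : (0:ENNReal) ^ (1 / p.toReal) = 0 := by
        apply ENNReal.zero_rpow_of_pos
        have : 0 < p.toReal := ENNReal.toReal_pos hp0 hp
        positivity
      have := (ENNReal.continuous_rpow_const (y := 1 / p.toReal)).continuousAt
        (x := (0:ENNReal))
      have := this.tendsto.comp hμA
      rwa [h0] at this
    exact tendsto_of_tendsto_of_tendsto_of_le_of_le tendsto_const_nhds hcont
      (fun n => zero_le) hle
  have hLtends : Tendsto G atTop (𝓝 (hχmem.toLp χ₀)) :=
    Lp.tendsto_Lp_of_tendsto_eLpNorm χ₀ hχmem htends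
  refine ⟨hχmem.toLp χ₀, ?_, hχmem.coeFn_toLp⟩
  exact hclosed.mem_of_tendsto hLtends (Filter.Eventually.of_forall fun n => hGW n)
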